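/- Let L be an FDD-lattice. Then the map η_L : L → CO(pt(L)) defined by η_L(x) = {p ∈ pt(L) : p(x) = 1} is an order isomorphism (in particular a lattice isomorphism) from L onto the lattice CO(pt(L)) of compact-open subsets of pt(L) ordered by inclusion: η_L is well-defined, order-preserving, injective, and surjective. -/

import Mathlib

section Domains

variable (P : Type*) [PartialOrder P]

/-- A dcpo: every nonempty directed subset has a least upper bound. -/
def DirectedComplete : Prop :=
  ∀ D : Set P, D.Nonempty → DirectedOn (· ≤ ·) D → ∃ s, IsLUB D s

variable {P}

/-- A compact (finite) element of a poset. -/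
def IsCompactElt (k : P) : Prop :=
  ∀ D : Set P, D.Nonempty → DirectedOn (· ≤ ·) D → ∀ s : P, IsLUB D s → k ≤ s →
    ∃ d ∈ D, k ≤ d

/-- A Scott-open subset: an upper set inaccessible by directed suprema. -/
def ScottOpen (U : Set P) : Prop :=
  IsUpperSet U ∧ ∀ D : Set P, D.Nonempty → DirectedOn (· ≤ ·) D → ∀ s : P, IsLUB D s →
    s ∈ U → (D ∩ U).Nonempty

/-- Compactness of a set with respect to covers by Scott-open sets. -/
def ScottCompactSet (K : Set P) : Prop :=
  ∀ C : Set (Set P), (∀ V ∈ C, ScottOpen V) → K ⊆ ⋃₀ C →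
    ∃ F : Finset (Set P), ↑F ⊆ C ∧ K ⊆ ⋃₀ (F : Set (Set P))

variable (P)

/-- The collection of compact-open subsets (w.r.t. the Scott topology). -/
def CO : Set (Set P) := {U | ScottOpen U ∧ ScottCompactSet U}

/-- An algebraic domain: a dcpo in which, for every `x`, the set of compact elements
below `x` is a (nonempty) directed set with least upper bound `x`. -/
def IsAlgebraicDomain : Prop :=
  DirectedComplete P ∧
  ∀ x : P,
    (Set.Iic x ∩ {k | IsCompactElt k}).Nonempty ∧
    DirectedOn (· ≤ ·) (Set.Iic x ∩ {k | IsCompactElt k}) ∧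
    IsLUB (Set.Iic x ∩ {k | IsCompactElt k}) x

/-- Every principal ideal `↓x` is a complete lattice in the induced order
(equivalently: every subset of `↓x` has a least upper bound inside `↓x`). -/
def PrincipalIdealsComplete : Prop :=
  ∀ x : P, ∀ S : Set P, S ⊆ Set.Iic x →
    ∃ s, s ≤ x ∧ (∀ a ∈ S, a ≤ s) ∧ ∀ u, u ≤ x → (∀ a ∈ S, a ≤ u) → s ≤ u

/-- An algebraic L-domain. -/
def IsAlgebraicLDomain : Prop := IsAlgebraicDomain P ∧ PrincipalIdealsComplete P

/-- The Lawson topology: generated by the Scott-open sets together with complements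
of principal filters. -/
def lawsonTopology : TopologicalSpace P :=
  TopologicalSpace.generateFrom ({U | ScottOpen U} ∪ {U | ∃ x : P, U = (Set.Ici x)ᶜ})

/-- Lawson compactness: compactness in the Lawson topology. -/
def LawsonCompact : Prop := @CompactSpace P (lawsonTopology P)

end Domains

section FDD

variable {L : Type*} [Lattice L] [BoundedOrder L]

/-- A nonzero co-prime element. -/
def CoprimeElt (a : L) : Prop :=
  a ≠ ⊥ ∧ ∀ x y : L, a ≤ x ⊔ y → a ≤ x ∨ a ≤ y

/-- A finitely disjunctive distributive lattice (FDD-lattice): a bounded distributive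
lattice in which (1) every element is a finite join of nonzero co-primes, and
(2) the meet of two nonzero co-primes is a finite join of pairwise disjoint
nonzero co-primes. -/
def IsFDD (L : Type*) [DistribLattice L] [BoundedOrder L] : Prop :=
  (∀ x : L, ∃ F : Finset L, (∀ a ∈ F, CoprimeElt a) ∧ x = F.sup id) ∧
  (∀ a b : L, CoprimeElt a → CoprimeElt b →
    ∃ F : Finset L, (∀ c ∈ F, CoprimeElt c) ∧
      (∀ c ∈ F, ∀ d ∈ F, c ≠ d → c ⊓ d = ⊥) ∧ a ⊓ b = F.sup id)

/-- A point of a bounded lattice: a lattice homomorphism into the two-element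
bounded lattice `Bool` preserving `0`, `1`, binary meets and binary joins. -/
def IsPoint (p : L → Bool) : Prop :=
  p ⊥ = false ∧ p ⊤ = true ∧
  (∀ x y : L, p (x ⊓ y) = (p x && p y)) ∧
  (∀ x y : L, p (x ⊔ y) = (p x || p y))

end FDD

/-- The poset of points of a bounded lattice, with the pointwise order. -/
def Pt (L : Type*) [Lattice L] [BoundedOrder L] : Type _ :=
  {p : L → Bool // IsPoint p}

noncomputable instance (L : Type*) [Lattice L] [BoundedOrder L] : PartialOrder (Pt L) :=
  inferInstanceAs (PartialOrder {p : L → Bool // IsPoint p})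

/-- `γ_a : L → {0,1}`, `γ_a x = 1` iff `a ≤ x`. -/
noncomputable def gammaPt {L : Type*} [Lattice L] [BoundedOrder L] (a : L) : L → Bool :=
  fun x => @decide (a ≤ x) (Classical.propDecidable _)

/-- A bounded lattice homomorphism. -/
def IsBLH {L M : Type*} [Lattice L] [BoundedOrder L] [Lattice M] [BoundedOrder M]
    (f : L → M) : Prop :=
  f ⊥ = ⊥ ∧ f ⊤ = ⊤ ∧ (∀ x y, f (x ⊓ y) = f x ⊓ f y) ∧ (∀ x y, f (x ⊔ y) = f x ⊔ f y)

section MyAux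

variable {L : Type*} [Lattice L] [BoundedOrder L]

lemma myBool_le_iff {a b : Bool} : a ≤ b ↔ (a = true → b = true) := by
  cases a <;> cases b <;> simp

lemma myBool_eq_of_iff {a b : Bool} (h : a = true ↔ b = true) : a = b := by
  cases a <;> cases b <;> simp_all

lemma myPt_le_iff {p q : Pt L} : p ≤ q ↔ ∀ x, p.1 x = true → q.1 x = true := by
  constructor
  · intro h x
    exact myBool_le_iff.mp (h x)
  · intro h x
    exact myBool_le_iff.mpr (h x)

lemma myPoint_mono {p : L → Bool} (hp : IsPoint p) {x y : L} (hxy : x ≤ y)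
    (hx : p x = true) : p y = true := by
  have h := hp.2.2.1 x y
  rw [inf_eq_left.mpr hxy, hx, Bool.true_and] at h
  exact h.symm

lemma myPoint_finsetSup {p : L → Bool} (hp : IsPoint p) {ι : Type*} (F : Finset ι)
    (f : ι → L) : p (F.sup f) = true ↔ ∃ i ∈ F, p (f i) = true := by
  classical
  induction F using Finset.induction with
  | empty => simp [hp.1]
  | insert _ _ h ih =>
    rename_i a s
    rw [Finset.sup_insert, hp.2.2.2, Bool.or_eq_true, ih]
    simp

lemma myGamma_eq_true {a x : L} : gammaPt a x = true ↔ a ≤ x := by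
  simp [gammaPt]

lemma myGamma_point {a : L} (ha : CoprimeElt a) : IsPoint (gammaPt a) := by
  refine ⟨?_, ?_, ?_, ?_⟩
  · have : ¬ (a ≤ ⊥) := fun h => ha.1 (le_bot_iff.mp h)
    simp [gammaPt, this]
  · simp [gammaPt]
  · intro x y
    apply myBool_eq_of_iff
    simp [gammaPt, le_inf_iff]
  · intro x y
    apply myBool_eq_of_iff
    simp only [myGamma_eq_true, Bool.or_eq_true]
    exact ⟨fun h => ha.2 x y h, fun h => h.elim (fun h => h.trans le_sup_left)
      (fun h => h.trans le_sup_right)⟩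

/-- bundled gamma point -/
noncomputable def myG {L : Type*} [Lattice L] [BoundedOrder L] (a : L)
    (ha : CoprimeElt a) : Pt L := ⟨gammaPt a, myGamma_point ha⟩

lemma myG_le_iff {a : L} (ha : CoprimeElt a) {p : Pt L} :
    myG a ha ≤ p ↔ p.1 a = true := by
  rw [myPt_le_iff]
  constructor
  · intro h; exact h a (myGamma_eq_true.mpr le_rfl)
  · intro h x hx
    exact myPoint_mono p.2 (myGamma_eq_true.mp hx) h

/-- The pointwise supremum of a family of points. -/
noncomputable def mySupFun (D : Set (Pt L)) : L → Bool :=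
  fun z => @decide (∃ p ∈ D, p.1 z = true) (Classical.propDecidable _)

lemma mySupFun_eq_true {D : Set (Pt L)} {z : L} :
    mySupFun D z = true ↔ ∃ p ∈ D, p.1 z = true := by
  simp [mySupFun]

lemma mySupFun_point {D : Set (Pt L)} (hne : D.Nonempty)
    (hdir : DirectedOn (· ≤ ·) D) : IsPoint (mySupFun D) := by
  refine ⟨?_, ?_, ?_, ?_⟩
  · apply myBool_eq_of_iff
    simp only [mySupFun_eq_true]
    constructor
    · rintro ⟨p, _, hp⟩
      rw [p.2.1] at hp; exact absurd hp (by simp)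
    · intro h; exact absurd h (by simp)
  · apply myBool_eq_of_iff
    simp only [mySupFun_eq_true]
    obtain ⟨p, hp⟩ := hne
    exact ⟨fun _ => by trivial, fun _ => ⟨p, hp, p.2.2.1⟩⟩
  · intro x y
    apply myBool_eq_of_iff
    simp only [mySupFun_eq_true, Bool.and_eq_true]
    constructor
    · rintro ⟨p, hpD, hp⟩
      rw [p.2.2.2.1, Bool.and_eq_true] at hp
      exact ⟨⟨p, hpD, hp.1⟩, ⟨p, hpD, hp.2⟩⟩
    · rintro ⟨⟨p, hpD, hpx⟩, ⟨q, hqD, hqy⟩⟩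
      obtain ⟨r, hrD, hpr, hqr⟩ := hdir p hpD q hqD
      have hrx : r.1 x = true := myPt_le_iff.mp hpr x hpx
      have hry : r.1 y = true := myPt_le_iff.mp hqr y hqy
      refine ⟨r, hrD, ?_⟩
      rw [r.2.2.2.1, hrx, hry]; rfl
  · intro x y
    apply myBool_eq_of_iff
    simp only [mySupFun_eq_true, Bool.or_eq_true]
    constructor
    · rintro ⟨p, hpD, hp⟩
      rw [p.2.2.2.2, Bool.or_eq_true] at hp
      exact hp.imp (fun h => ⟨p, hpD, h⟩) (fun h => ⟨p, hpD, h⟩)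
    · rintro (⟨p, hpD, hp⟩ | ⟨p, hpD, hp⟩) <;>
        refine ⟨p, hpD, ?_⟩ <;> rw [p.2.2.2.2, hp] <;> simp

/-- Key lemma: the value of a directed lub at any lattice element. -/
lemma myLub_eval {D : Set (Pt L)} (hne : D.Nonempty) (hdir : DirectedOn (· ≤ ·) D)
    {s : Pt L} (hs : IsLUB D s) (x : L) :
    s.1 x = true ↔ ∃ p ∈ D, p.1 x = true := by
  constructor
  · intro hsx
    have hub : (⟨mySupFun D, mySupFun_point hne hdir⟩ : Pt L) ∈ upperBounds D := by
      intro p hpD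
      refine myPt_le_iff.mpr ?_
      intro z hz
      exact mySupFun_eq_true.mpr ⟨p, hpD, hz⟩
    have hsle := hs.2 hub
    have := myPt_le_iff.mp hsle x hsx
    exact mySupFun_eq_true.mp this
  · rintro ⟨p, hpD, hpx⟩
    exact myPt_le_iff.mp (hs.1 hpD) x hpx

lemma myEta_scottOpen (x : L) : ScottOpen {p : Pt L | p.1 x = true} := by
  constructor
  · intro p q hpq hp
    exact myPt_le_iff.mp hpq x hp
  · intro D hne hdir s hlub hs
    obtain ⟨p, hpD, hpx⟩ := (myLub_eval hne hdir hlub x).mp hs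
    exact ⟨p, hpD, hpx⟩

end MyAux

section MyFDD

variable {L : Type*} [DistribLattice L] [BoundedOrder L]

lemma myEta_scottCompact (hL : IsFDD L) (x : L) :
    ScottCompactSet {p : Pt L | p.1 x = true} := by
  classical
  intro C hC hcov
  obtain ⟨F, hFcp, hFx⟩ := hL.1 x
  have hchoice : ∀ a : {a : L // a ∈ F}, ∃ V ∈ C, myG a.1 (hFcp a.1 a.2) ∈ V := by
    rintro ⟨a, ha⟩
    have hax : a ≤ x := hFx ▸ Finset.le_sup (f := id) ha
    have : myG a (hFcp a ha) ∈ {p : Pt L | p.1 x = true} :=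
      myGamma_eq_true.mpr hax
    obtain ⟨V, hV, hmem⟩ := hcov this
    exact ⟨V, hV, hmem⟩
  choose g hg1 hg2 using hchoice
  refine ⟨F.attach.image g, ?_, ?_⟩
  · intro V hV
    simp only [Finset.coe_image, Set.mem_image] at hV
    obtain ⟨a, _, rfl⟩ := hV
    exact hg1 a
  · intro p hp
    have hpx : p.1 x = true := hp
    rw [hFx] at hpx
    obtain ⟨a, haF, hpa⟩ := (myPoint_finsetSup p.2 F id).mp hpx
    refine ⟨g ⟨a, haF⟩, ?_, ?_⟩
    · simp only [Finset.coe_image, Set.mem_image]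
      exact ⟨⟨a, haF⟩, Finset.mem_attach _ _, rfl⟩
    · have hupper := (hC _ (hg1 ⟨a, haF⟩)).1
      exact hupper ((myG_le_iff (hFcp a haF)).mpr hpa) (hg2 ⟨a, haF⟩)

/-- The set of gamma-points "below" a given point. -/
def myDp (p : Pt L) : Set (Pt L) :=
  {q | ∃ a : L, ∃ ha : CoprimeElt a, p.1 a = true ∧ q = myG a ha}

lemma myDp_nonempty (hL : IsFDD L) (p : Pt L) : (myDp p).Nonempty := by
  obtain ⟨F, hFcp, hFt⟩ := hL.1 (⊤ : L)
  have : p.1 (⊤ : L) = true := p.2.2.1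
  rw [hFt] at this
  obtain ⟨a, haF, hpa⟩ := (myPoint_finsetSup p.2 F id).mp this
  exact ⟨myG a (hFcp a haF), a, hFcp a haF, hpa, rfl⟩

lemma myDp_directed (hL : IsFDD L) (p : Pt L) : DirectedOn (· ≤ ·) (myDp p) := by
  rintro q1 ⟨a, ha, hpa, rfl⟩ q2 ⟨b, hb, hpb, rfl⟩
  obtain ⟨G, hGcp, _, hab⟩ := hL.2 a b ha hb
  have hpab : p.1 (a ⊓ b) = true := by
    rw [p.2.2.2.1, hpa, hpb]; rfl
  rw [hab] at hpab
  obtain ⟨c, hcG, hpc⟩ := (myPoint_finsetSup p.2 G id).mp hpab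
  have hcab : c ≤ a ⊓ b := hab ▸ Finset.le_sup (f := id) hcG
  refine ⟨myG c (hGcp c hcG), ⟨c, hGcp c hcG, hpc, rfl⟩, ?_, ?_⟩
  · exact myPt_le_iff.mpr fun x hx =>
      myGamma_eq_true.mpr ((hcab.trans inf_le_left).trans (myGamma_eq_true.mp hx))
  · exact myPt_le_iff.mpr fun x hx =>
      myGamma_eq_true.mpr ((hcab.trans inf_le_right).trans (myGamma_eq_true.mp hx))

lemma myDp_lub (hL : IsFDD L) (p : Pt L) : IsLUB (myDp p) p := by
  constructor
  · rintro q ⟨a, ha, hpa, rfl⟩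
    exact (myG_le_iff ha).mpr hpa
  · intro u hu
    rw [myPt_le_iff]
    intro x hpx
    obtain ⟨F, hFcp, hFx⟩ := hL.1 x
    rw [hFx] at hpx
    obtain ⟨a, haF, hpa⟩ := (myPoint_finsetSup p.2 F id).mp hpx
    have hax : a ≤ x := hFx ▸ Finset.le_sup (f := id) haF
    have hq : myG a (hFcp a haF) ∈ myDp p := ⟨a, hFcp a haF, hpa, rfl⟩
    exact myPt_le_iff.mp (hu hq) x (myGamma_eq_true.mpr hax)

end MyFDD

/-- For an FDD-lattice `L`, the map `η_L : x ↦ {p ∈ Pt L : p x = 1}` is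
an order isomorphism from `L` onto the lattice `CO (Pt L)` of compact-open subsets of
`Pt L` ordered by inclusion: it is well-defined, order-preserving (indeed order
reflecting), injective and surjective. -/
theorem stmt13 {L : Type*} [DistribLattice L] [BoundedOrder L] (hL : IsFDD L) :
    (∀ x : L, {p : Pt L | p.1 x = true} ∈ CO (Pt L)) ∧
    (∀ x y : L, x ≤ y ↔ {p : Pt L | p.1 x = true} ⊆ {p : Pt L | p.1 y = true}) ∧
    Function.Injective (fun x : L => {p : Pt L | p.1 x = true}) ∧
    (∀ U ∈ CO (Pt L), ∃ x : L, {p : Pt L | p.1 x = true} = U) := by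
  classical
  have hord : ∀ x y : L, x ≤ y ↔
      {p : Pt L | p.1 x = true} ⊆ {p : Pt L | p.1 y = true} := by
    intro x y
    constructor
    · intro hxy p hp
      exact myPoint_mono p.2 hxy hp
    · intro hsub
      obtain ⟨F, hFcp, hFx⟩ := hL.1 x
      rw [hFx]
      apply Finset.sup_le
      intro a haF
      have hax : a ≤ x := hFx ▸ Finset.le_sup (f := id) haF
      have h1 : (myG a (hFcp a haF)) ∈ {p : Pt L | p.1 x = true} :=
        myGamma_eq_true.mpr hax
      exact myGamma_eq_true.mp (hsub h1)
  refine ⟨fun x => ⟨myEta_scottOpen x, myEta_scottCompact hL x⟩, hord, ?_, ?_⟩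
  · intro x y hxy
    simp only at hxy
    exact le_antisymm ((hord x y).mpr hxy.le) ((hord y x).mpr hxy.ge)
  · intro U hU
    -- cover U by the sets η(a) for coprime a with γ_a ∈ U
    set C : Set (Set (Pt L)) :=
      {S | ∃ a : L, ∃ ha : CoprimeElt a, S = {r : Pt L | r.1 a = true} ∧ myG a ha ∈ U}
      with hC
    have hCopen : ∀ V ∈ C, ScottOpen V := by
      rintro V ⟨a, ha, rfl, _⟩
      exact myEta_scottOpen a
    have hCsubU : ∀ V ∈ C, V ⊆ U := by
      rintro V ⟨a, ha, rfl, hgU⟩ r hr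
      exact hU.1.1 ((myG_le_iff ha).mpr hr) hgU
    have hcov : U ⊆ ⋃₀ C := by
      intro p hpU
      obtain ⟨q, hqDp, hqU⟩ := hU.1.2 (myDp p) (myDp_nonempty hL p)
        (myDp_directed hL p) p (myDp_lub hL p) hpU
      obtain ⟨a, ha, hpa, rfl⟩ := hqDp
      exact ⟨{r : Pt L | r.1 a = true}, ⟨a, ha, rfl, hqU⟩, hpa⟩
    obtain ⟨Fs, hFsC, hFscov⟩ := hU.2 C hCopen hcov
    have hch : ∀ V : Set (Pt L), V ∈ Fs → ∃ a : L, ∃ ha : CoprimeElt a,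
        V = {r : Pt L | r.1 a = true} ∧ myG a ha ∈ U := fun V hV => hFsC hV
    choose f hf using hch
    refine ⟨Fs.attach.sup (fun V => f V.1 V.2), ?_⟩
    ext p
    simp only [Set.mem_setOf_eq]
    rw [myPoint_finsetSup p.2 Fs.attach (fun V => f V.1 V.2)]
    constructor
    · rintro ⟨⟨V, hV⟩, _, hpf⟩
      obtain ⟨ha, hVeq, hgU⟩ := hf V hV
      exact hCsubU V (hFsC hV) (hVeq ▸ hpf)
    · intro hpU
      obtain ⟨V, hVFs, hpV⟩ := hFscov hpU
      obtain ⟨ha, hVeq, hgU⟩ := hf V hVFs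
      refine ⟨⟨V, hVFs⟩, Finset.mem_attach _ _, ?_⟩
      rw [hVeq] at hpV
      exact hpV
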